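/- Let ρ_{st} : L^p(F_t) → L^p(F_s), p < ∞, be a convex risk measure (convex, monotone, F_s-translation invariant) that is continuous from below and continuous from above. Let C ⊆ L^p(F_t) be a set of random variables each bounded from below such that C is closed under g ↦ max(g, −n) and g ↦ min(g, n) stays dominated by elements of C. Then for every X ∈ L^p(F_t), essinf_{g ∈ C} ρ_{st}(g − X) = essinf_{g ∈ C ∩ L^∞(F_t)} ρ_{st}(g − X). -/

import Mathlib

open MeasureTheory Filter
open scoped ENNReal

/-- for a convex risk measure `ρ_{st}` on `L^p`, continuous from
below and above, and a set `C` of claims bounded from below, closed under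
truncation from below and above, the essential infimum of `ρ_{st}(g - X)` over
`g ∈ C` coincides with the essential infimum over `g ∈ C ∩ L^∞`. Essential
infima are characterised as greatest a.s. lower bounds. -/
theorem stmt16 {Ω : Type*} {m0 : MeasurableSpace Ω} (P : Measure Ω) [IsProbabilityMeasure P]
    (ms mt : MeasurableSpace Ω) (hst : ms ≤ mt) (ht : mt ≤ m0)
    (p : ℝ≥0∞) (hp : 1 ≤ p) (hp' : p ≠ ∞)
    (ρ : (Ω → ℝ) → (Ω → ℝ))
    (hconv : ∀ (X Y : Ω → ℝ) (l : ℝ), MemLp X p P → MemLp Y p P → 0 ≤ l → l ≤ 1 →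
      ∀ᵐ ω ∂P, ρ (fun ω' => l * X ω' + (1 - l) * Y ω') ω ≤ l * ρ X ω + (1 - l) * ρ Y ω)
    (hmono : ∀ X Y : Ω → ℝ, MemLp X p P → MemLp Y p P →
      (∀ᵐ ω ∂P, Y ω ≤ X ω) → ∀ᵐ ω ∂P, ρ X ω ≤ ρ Y ω)
    (htrans : ∀ X f : Ω → ℝ, MemLp X p P → MemLp f p P → Measurable[ms] f →
      ρ (X + f) =ᵐ[P] ρ X - f)
    (hcontb : ∀ (Xn : ℕ → Ω → ℝ) (X : Ω → ℝ), (∀ n, MemLp (Xn n) p P) → MemLp X p P →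
      (∀ᵐ ω ∂P, Monotone fun n => Xn n ω) →
      (∀ᵐ ω ∂P, Tendsto (fun n => Xn n ω) atTop (nhds (X ω))) →
      ∀ᵐ ω ∂P, Tendsto (fun n => ρ (Xn n) ω) atTop (nhds (ρ X ω)))
    (hconta : ∀ (Xn : ℕ → Ω → ℝ) (X : Ω → ℝ), (∀ n, MemLp (Xn n) p P) → MemLp X p P →
      (∀ᵐ ω ∂P, Antitone fun n => Xn n ω) →
      (∀ᵐ ω ∂P, Tendsto (fun n => Xn n ω) atTop (nhds (X ω))) →
      ∀ᵐ ω ∂P, Tendsto (fun n => ρ (Xn n) ω) atTop (nhds (ρ X ω)))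
    (C : Set (Ω → ℝ)) (hCne : C.Nonempty)
    (hCsub : ∀ g ∈ C, MemLp g p P)
    (hCbdd : ∀ g ∈ C, ∃ M : ℝ, ∀ᵐ ω ∂P, M ≤ g ω)
    (hCmax : ∀ g ∈ C, ∀ n : ℕ, (fun ω => max (g ω) (-(n : ℝ))) ∈ C)
    (hCmin : ∀ g ∈ C, ∀ n : ℕ, (fun ω => min (g ω) (n : ℝ)) ∈ C)
    (X : Ω → ℝ) (hX : MemLp X p P)
    -- `EIC` is the essential infimum of `ρ(g - X)` over `g ∈ C`
    (EIC : Ω → ℝ)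
    (hEIC_lb : ∀ g ∈ C, ∀ᵐ ω ∂P, EIC ω ≤ ρ (fun ω' => g ω' - X ω') ω)
    (hEIC_max : ∀ Z : Ω → ℝ,
      (∀ g ∈ C, ∀ᵐ ω ∂P, Z ω ≤ ρ (fun ω' => g ω' - X ω') ω) → ∀ᵐ ω ∂P, Z ω ≤ EIC ω)
    -- `EIB` is the essential infimum of `ρ(g - X)` over bounded `g ∈ C`
    (EIB : Ω → ℝ)
    (hEIB_lb : ∀ g ∈ C, (∃ Cb : ℝ, ∀ᵐ ω ∂P, |g ω| ≤ Cb) →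
      ∀ᵐ ω ∂P, EIB ω ≤ ρ (fun ω' => g ω' - X ω') ω)
    (hEIB_max : ∀ Z : Ω → ℝ,
      (∀ g ∈ C, (∃ Cb : ℝ, ∀ᵐ ω ∂P, |g ω| ≤ Cb) →
        ∀ᵐ ω ∂P, Z ω ≤ ρ (fun ω' => g ω' - X ω') ω) → ∀ᵐ ω ∂P, Z ω ≤ EIB ω) :
    EIC =ᵐ[P] EIB := by
  have h1 : ∀ᵐ ω ∂P, EIC ω ≤ EIB ω := hEIB_max EIC (fun g hg _ => hEIC_lb g hg)
  have h2 : ∀ᵐ ω ∂P, EIB ω ≤ EIC ω := by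
    apply hEIC_max EIB
    intro g hg
    set gn : ℕ → Ω → ℝ := fun n ω => min (g ω) (n : ℝ) with hgn_def
    have hgnC : ∀ n, gn n ∈ C := fun n => hCmin g hg n
    obtain ⟨M, hM⟩ := hCbdd g hg
    have hbdd : ∀ n : ℕ, ∃ Cb : ℝ, ∀ᵐ ω ∂P, |gn n ω| ≤ Cb := by
      intro n
      refine ⟨max |M| n, ?_⟩
      filter_upwards [hM] with ω hMω
      rw [abs_le]
      constructor
      · have : min M (n : ℝ) ≤ min (g ω) (n : ℝ) := by
          exact min_le_min hMω le_rfl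
        have h1 : -(max |M| (n : ℝ)) ≤ min M (n : ℝ) := by
          rw [le_min_iff]
          constructor
          · linarith [neg_abs_le M, le_max_left |M| (n : ℝ)]
          · linarith [le_max_right |M| (n : ℝ), Nat.cast_nonneg (α := ℝ) n]
        exact h1.trans this
      · exact (min_le_right _ _).trans (le_max_right _ _)
    have hEIBn : ∀ n : ℕ, ∀ᵐ ω ∂P, EIB ω ≤ ρ (fun ω' => gn n ω' - X ω') ω :=
      fun n => hEIB_lb (gn n) (hgnC n) (hbdd n)
    have hEIBall : ∀ᵐ ω ∂P, ∀ n : ℕ, EIB ω ≤ ρ (fun ω' => gn n ω' - X ω') ω :=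
      ae_all_iff.mpr hEIBn
    have hmemn : ∀ n, MemLp (fun ω' => gn n ω' - X ω') p P :=
      fun n => (hCsub _ (hgnC n)).sub hX
    have hmemg : MemLp (fun ω' => g ω' - X ω') p P := (hCsub g hg).sub hX
    have hmonoseq : ∀ᵐ ω ∂P, Monotone fun n => gn n ω - X ω := by
      filter_upwards with ω
      intro a b hab
      simp only [hgn_def]
      have : min (g ω) (a : ℝ) ≤ min (g ω) (b : ℝ) :=
        min_le_min le_rfl (by exact_mod_cast hab)
      linarith
    have htendseq : ∀ᵐ ω ∂P, Tendsto (fun n => gn n ω - X ω) atTop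
        (nhds (g ω - X ω)) := by
      filter_upwards with ω
      have hev : ∀ᶠ n : ℕ in atTop, gn n ω - X ω = g ω - X ω := by
        filter_upwards [eventually_ge_atTop ⌈g ω⌉₊] with n hn
        have : g ω ≤ (n : ℝ) := le_trans (Nat.le_ceil _) (by exact_mod_cast hn)
        simp [hgn_def, min_eq_left this]
      exact Tendsto.congr' (hev.mono fun n h => h.symm) tendsto_const_nhds
    have hrhot := hcontb (fun n ω => gn n ω - X ω) (fun ω => g ω - X ω)
      hmemn hmemg hmonoseq htendseq
    filter_upwards [hEIBall, hrhot] with ω hle htend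
    exact ge_of_tendsto' htend hle
  filter_upwards [h1, h2] with ω a b
  exact le_antisymm a b
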